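/- arXiv:math/0212294 — 9 statements merged into one kernel-verified Lean document; each statement's English description precedes it below -/
import Mathlib

section
/- Let V be a complete subsemimodule of a complete right K-semimodule X, with generating family W (every v ∈ V is a supremum of elements wλ_w with w ∈ W, λ_w ∈ K). Then the canonical projector P_V(x) = max{v ∈ V : v ≤ x} satisfies P_V(x) = ⊔_{w∈W} w·(w\x). -/
variable {K : Type*} [CompleteLattice K] [Monoid K]
variable {X : Type*} [CompleteLattice X]

/-- Residual of the action: x\y = ⊔ {l : K | x·l ≤ y}. -/
def lres (act : X → K → X) (x y : X) : K := sSup {l : K | act x l ≤ y}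

/-- Canonical projector onto a sup-closed subset V: P_V(x) = ⊔ {v ∈ V | v ≤ x}. -/
def proj (V : Set X) (x : X) : X := sSup {v : X | v ∈ V ∧ v ≤ x}

/-- Projector formula: if W generates the complete subsemimodule V, then
P_V(x) = ⊔_{w ∈ W} w·(w\x). -/
theorem projector_formula
    (act : X → K → X)
    (hKl : ∀ (a : K) (S : Set K), a * sSup S = ⨆ b ∈ S, a * b)
    (hKr : ∀ (a : K) (S : Set K), sSup S * a = ⨆ b ∈ S, b * a)
    (hassoc : ∀ (x : X) (a b : K), act (act x a) b = act x (a * b))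
    (hone : ∀ x : X, act x 1 = x)
    (hsupS : ∀ (x : X) (S : Set K), act x (sSup S) = ⨆ a ∈ S, act x a)
    (hsupV : ∀ (U : Set X) (a : K), act (sSup U) a = ⨆ x ∈ U, act x a)
    (V : Set X)
    (hVsup : ∀ U : Set X, U ⊆ V → sSup U ∈ V)
    (hVact : ∀ v ∈ V, ∀ a : K, act v a ∈ V)
    (W : Set X) (hWV : W ⊆ V)
    (hgen : ∀ v ∈ V, ∃ lam : X → K, v = ⨆ w ∈ W, act w (lam w))
    (x : X) :
    proj V x = ⨆ w ∈ W, act w (lres act w x) := by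
  have hmono : ∀ (w : X) (a b : K), a ≤ b → act w a ≤ act w b := by
    intro w a b hab
    have h := hsupS w {a, b}
    have hs : sSup ({a, b} : Set K) = b := by
      simp [sSup_pair, sup_eq_right.mpr hab]
    rw [hs] at h
    have : act w a ≤ ⨆ c ∈ ({a, b} : Set K), act w c :=
      le_biSup _ (by simp)
    rw [← h] at this
    exact this
  apply le_antisymm
  · have hPV : proj V x ∈ V := hVsup _ (fun v hv => hv.1)
    have hPx : proj V x ≤ x := sSup_le (fun v hv => hv.2)
    obtain ⟨lam, hlam⟩ := hgen _ hPV
    rw [hlam]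
    apply iSup₂_le
    intro w hw
    have hle : act w (lam w) ≤ x := by
      calc act w (lam w) ≤ ⨆ w ∈ W, act w (lam w) := le_biSup (fun w => act w (lam w)) hw
        _ = proj V x := hlam.symm
        _ ≤ x := hPx
    calc act w (lam w) ≤ act w (lres act w x) :=
          hmono w _ _ (le_sSup hle)
      _ ≤ ⨆ w ∈ W, act w (lres act w x) := le_biSup (fun w => act w (lres act w x)) hw
  · apply iSup₂_le
    intro w hw
    apply le_sSup
    refine ⟨hVact w (hWV hw) _, ?_⟩
    rw [lres, hsupS]
    exact iSup₂_le fun a ha => ha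
end

section
/- Let V be a complete subsemimodule of a complete right K-semimodule X with generating family W. Then P_V(x) = ⊓{z ∈ X : w\z ≥ w\x for all w ∈ W}, and this infimum is attained (it is the bottom element of that set). -/
variable {K : Type*} [CompleteLattice K] [Monoid K]
variable {X : Type*} [CompleteLattice X]

/-- Dual characterization of the projector: P_V(x) is the least element of
{z : w\z ≥ w\x for all w ∈ W}. -/
theorem projector_dual_characterization
    (act : X → K → X)
    (hKl : ∀ (a : K) (S : Set K), a * sSup S = ⨆ b ∈ S, a * b)
    (hKr : ∀ (a : K) (S : Set K), sSup S * a = ⨆ b ∈ S, b * a)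
    (hassoc : ∀ (x : X) (a b : K), act (act x a) b = act x (a * b))
    (hone : ∀ x : X, act x 1 = x)
    (hsupS : ∀ (x : X) (S : Set K), act x (sSup S) = ⨆ a ∈ S, act x a)
    (hsupV : ∀ (U : Set X) (a : K), act (sSup U) a = ⨆ x ∈ U, act x a)
    (V : Set X)
    (hVsup : ∀ U : Set X, U ⊆ V → sSup U ∈ V)
    (hVact : ∀ v ∈ V, ∀ a : K, act v a ∈ V)
    (W : Set X) (hWV : W ⊆ V)
    (hgen : ∀ v ∈ V, ∃ lam : X → K, v = ⨆ w ∈ W, act w (lam w))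
    (x : X) :
    IsLeast {z : X | ∀ w ∈ W, lres act w x ≤ lres act w z} (proj V x) := by
  have hmono : ∀ (w : X) (a b : K), a ≤ b → act w a ≤ act w b := by
    intro w a b hab
    have h := hsupS w {a, b}
    have h2 : sSup ({a, b} : Set K) = b := by
      simp [sup_eq_right.2 hab]
    rw [h2] at h
    calc act w a ≤ ⨆ c ∈ ({a, b} : Set K), act w c := le_biSup _ (by simp)
      _ = act w b := h.symm
  have hres : ∀ (w z : X), act w (lres act w z) ≤ z := by
    intro w z
    rw [lres, hsupS]
    exact iSup₂_le fun a ha => ha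
  constructor
  · intro w hw
    have h1 : act w (lres act w x) ∈ V := hVact w (hWV hw) _
    have h2 : act w (lres act w x) ≤ proj V x := le_sSup ⟨h1, hres w x⟩
    exact le_sSup h2
  · intro z hz
    refine sSup_le fun v ⟨hvV, hvx⟩ => ?_
    obtain ⟨lam, hlam⟩ := hgen v hvV
    rw [hlam]
    refine iSup₂_le fun w hw => ?_
    have h1 : lam w ≤ lres act w x := le_sSup (by
      show act w (lam w) ≤ x
      refine le_trans ?_ hvx
      rw [hlam]; exact le_biSup (fun w => act w (lam w)) hw)
    have h2 : lam w ≤ lres act w z := h1.trans (hz w hw)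
    exact (hmono w _ _ h2).trans (hres w z)
end

section
/- (Universal Separation Theorem, part 1) Let V be a complete subsemimodule of a complete right K-semimodule X and x ∈ X. Then for all v ∈ V, v\P_V(x) = v\x. -/
variable {K : Type*} [CompleteLattice K] [Monoid K]
variable {X : Type*} [CompleteLattice X]

/-- Universal Separation Theorem, part 1: v\P_V(x) = v\x for every v ∈ V. -/
theorem universal_separation_orth
    (act : X → K → X)
    (hKl : ∀ (a : K) (S : Set K), a * sSup S = ⨆ b ∈ S, a * b)
    (hKr : ∀ (a : K) (S : Set K), sSup S * a = ⨆ b ∈ S, b * a)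
    (hassoc : ∀ (x : X) (a b : K), act (act x a) b = act x (a * b))
    (hone : ∀ x : X, act x 1 = x)
    (hsupS : ∀ (x : X) (S : Set K), act x (sSup S) = ⨆ a ∈ S, act x a)
    (hsupV : ∀ (U : Set X) (a : K), act (sSup U) a = ⨆ x ∈ U, act x a)
    (V : Set X)
    (hVsup : ∀ U : Set X, U ⊆ V → sSup U ∈ V)
    (hVact : ∀ v ∈ V, ∀ a : K, act v a ∈ V)
    (x : X) :
    ∀ v ∈ V, lres act v (proj V x) = lres act v x := by
  intro v hv
  have hproj_le : proj V x ≤ x := sSup_le fun y hy => hy.2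
  unfold lres
  congr 1
  ext l
  constructor
  · exact fun h => le_trans h hproj_le
  · exact fun h => le_sSup ⟨hVact v hv l, h⟩
end

section
/- (Universal Separation Theorem, part 2) Let V be a complete subsemimodule of a complete right K-semimodule X and x ∈ X. Then x ∈ V if and only if x\P_V(x) = x\x. -/
variable {K : Type*} [CompleteLattice K] [Monoid K]
variable {X : Type*} [CompleteLattice X]

/-- Universal Separation Theorem, part 2: x ∈ V ⟺ x\P_V(x) = x\x. -/
theorem universal_separation_mem
    (act : X → K → X)
    (hKl : ∀ (a : K) (S : Set K), a * sSup S = ⨆ b ∈ S, a * b)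
    (hKr : ∀ (a : K) (S : Set K), sSup S * a = ⨆ b ∈ S, b * a)
    (hassoc : ∀ (x : X) (a b : K), act (act x a) b = act x (a * b))
    (hone : ∀ x : X, act x 1 = x)
    (hsupS : ∀ (x : X) (S : Set K), act x (sSup S) = ⨆ a ∈ S, act x a)
    (hsupV : ∀ (U : Set X) (a : K), act (sSup U) a = ⨆ x ∈ U, act x a)
    (V : Set X)
    (hVsup : ∀ U : Set X, U ⊆ V → sSup U ∈ V)
    (hVact : ∀ v ∈ V, ∀ a : K, act v a ∈ V)
    (x : X) :
    x ∈ V ↔ lres act x (proj V x) = lres act x x := by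
  constructor
  · intro hx
    have hP : proj V x = x :=
      le_antisymm (sSup_le fun v hv => hv.2) (le_sSup ⟨hx, le_rfl⟩)
    rw [hP]
  · intro h
    have hPle : proj V x ≤ x := sSup_le fun v hv => hv.2
    -- act x (lres act x (proj V x)) ≤ proj V x
    have h1 : act x (lres act x (proj V x)) ≤ proj V x := by
      rw [lres, hsupS]
      exact iSup₂_le fun a ha => ha
    -- x ≤ act x (lres act x x)
    have h2 : x ≤ act x (lres act x x) := by
      rw [lres, hsupS]
      have : act x 1 ≤ ⨆ a ∈ {l : K | act x l ≤ x}, act x a :=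
        le_biSup _ (by simp [hone])
      simpa [hone] using this
    have hxP : x = proj V x := le_antisymm (h2.trans (h ▸ h1)) hPle
    have : proj V x ∈ V := hVsup _ fun v hv => hv.1
    rwa [hxP]
end

section
/- (Separation of Points) Let X be a complete right K-semimodule over a complete idempotent semiring K. If x, y ∈ X satisfy x\z = y\z for all z ∈ X, then x = y. -/
variable {K : Type*} [CompleteLattice K] [Monoid K]
variable {X : Type*} [CompleteLattice X]

/-- Separation of points: if x\z = y\z for all z then x = y. -/
theorem separation_of_points
    (act : X → K → X)
    (hKl : ∀ (a : K) (S : Set K), a * sSup S = ⨆ b ∈ S, a * b)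
    (hKr : ∀ (a : K) (S : Set K), sSup S * a = ⨆ b ∈ S, b * a)
    (hassoc : ∀ (x : X) (a b : K), act (act x a) b = act x (a * b))
    (hone : ∀ x : X, act x 1 = x)
    (hsupS : ∀ (x : X) (S : Set K), act x (sSup S) = ⨆ a ∈ S, act x a)
    (hsupV : ∀ (U : Set X) (a : K), act (sSup U) a = ⨆ x ∈ U, act x a)
    (x y : X)
    (h : ∀ z : X, lres act x z = lres act y z) :
    x = y := by
  -- monotonicity of act in the scalar
  have mono : ∀ (w : X) (a b : K), a ≤ b → act w a ≤ act w b := by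
    intro w a b hab
    have hs : sSup ({a, b} : Set K) = b := by
      simp [sSup_insert, sup_eq_right.mpr hab]
    have := hsupS w ({a, b} : Set K)
    rw [hs] at this
    rw [this]
    exact le_iSup₂ (f := fun c (_ : c ∈ ({a, b} : Set K)) => act w c) a (by simp)
  -- act w (lres act w z) ≤ z
  have key : ∀ (w z : X), act w (lres act w z) ≤ z := by
    intro w z
    rw [lres, hsupS]
    exact iSup₂_le fun a ha => ha
  have one_le : ∀ w : X, (1 : K) ≤ lres act w w := fun w =>
    le_sSup (by simp [Set.mem_setOf_eq, hone])
  have hxy : y ≤ x := by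
    have h1 : (1 : K) ≤ lres act y x := (h x) ▸ one_le x
    calc y = act y 1 := (hone y).symm
      _ ≤ act y (lres act y x) := mono y 1 _ h1
      _ ≤ x := key y x
  have hyx : x ≤ y := by
    have h1 : (1 : K) ≤ lres act x y := (h y).symm ▸ one_le y
    calc x = act x 1 := (hone x).symm
      _ ≤ act x (lres act x y) := mono x 1 _ h1
      _ ≤ y := key x y
  exact le_antisymm hyx hxy
end

section
/- (Anti-triangular inequality for the generalized Hilbert metric) In a complete semimodule X over a commutative complete idempotent semiring K, define d_H(x,y) = (x\y)(y\x). Then for all x, y, z ∈ X, d_H(x,z) ≥ d_H(x,y)·d_H(y,z). -/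
variable {K : Type*} [CompleteLattice K] [CommMonoid K]
variable {X : Type*} [CompleteLattice X]

/-- Anti-triangular inequality for the generalized Hilbert metric
d_H(x,y) = (x\y)(y\x) over a commutative complete idempotent semiring:
d_H(x,z) ≥ d_H(x,y)·d_H(y,z). -/
theorem hilbert_anti_triangular
    (act : X → K → X)
    (hKl : ∀ (a : K) (S : Set K), a * sSup S = ⨆ b ∈ S, a * b)
    (hKr : ∀ (a : K) (S : Set K), sSup S * a = ⨆ b ∈ S, b * a)
    (hassoc : ∀ (x : X) (a b : K), act (act x a) b = act x (a * b))
    (hone : ∀ x : X, act x 1 = x)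
    (hsupS : ∀ (x : X) (S : Set K), act x (sSup S) = ⨆ a ∈ S, act x a)
    (hsupV : ∀ (U : Set X) (a : K), act (sSup U) a = ⨆ x ∈ U, act x a)
    (x y z : X) :
    (lres act x y * lres act y x) * (lres act y z * lres act z y) ≤
      lres act x z * lres act z x := by
  -- act monotone in first argument
  have monoX : ∀ (u v : X) (a : K), u ≤ v → act u a ≤ act v a := by
    intro u v a huv
    have h : act (sSup {u, v}) a = ⨆ w ∈ ({u, v} : Set X), act w a := hsupV _ a
    have hs : sSup ({u, v} : Set X) = v := by
      rw [sSup_pair, sup_eq_right.mpr huv]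
    rw [hs] at h
    rw [h]
    exact le_iSup₂_of_le u (by simp) le_rfl
  -- act x (lres act x y) ≤ y
  have key : ∀ u v : X, act u (lres act u v) ≤ v := by
    intro u v
    rw [lres, hsupS]
    exact iSup₂_le fun a ha => ha
  -- composition
  have comp : ∀ u v w : X, lres act u v * lres act v w ≤ lres act u w := by
    intro u v w
    apply le_sSup
    show act u (lres act u v * lres act v w) ≤ w
    rw [← hassoc]
    exact le_trans (monoX _ _ _ (key u v)) (key v w)
  -- mul monotone
  have mulmono : ∀ a b c d : K, a ≤ b → c ≤ d → a * c ≤ b * d := by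
    intro a b c d hab hcd
    have h1 : a * c ≤ b * c := by
      have := hKr c ({a, b} : Set K)
      rw [sSup_pair, sup_eq_right.mpr hab] at this
      rw [this]
      exact le_iSup₂_of_le a (by simp) le_rfl
    have h2 : b * c ≤ b * d := by
      have := hKl b ({c, d} : Set K)
      rw [sSup_pair, sup_eq_right.mpr hcd] at this
      rw [this]
      exact le_iSup₂_of_le c (by simp) le_rfl
    exact h1.trans h2
  calc (lres act x y * lres act y x) * (lres act y z * lres act z y)
      = (lres act x y * lres act y z) * (lres act z y * lres act y x) := by
        rw [mul_mul_mul_comm, mul_comm (lres act y x)]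
    _ ≤ lres act x z * lres act z x := mulmono _ _ _ _ (comp x y z) (comp z y x)
end

section
/- (Definiteness of the generalized Hilbert metric) In a complete right K-semimodule X over a complete idempotent semiring K, if d_H(x,y) = (x\y)(y\x) equals the unit e of K, then x = y·λ for some λ ∈ K (indeed x = y·(y\x)). -/
variable {K : Type*} [CompleteLattice K] [Monoid K]
variable {X : Type*} [CompleteLattice X]

/-- Definiteness of the generalized Hilbert metric: if d_H(x,y) = e then
x = y·(y\x). -/
theorem hilbert_definite
    (act : X → K → X)
    (hKl : ∀ (a : K) (S : Set K), a * sSup S = ⨆ b ∈ S, a * b)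
    (hKr : ∀ (a : K) (S : Set K), sSup S * a = ⨆ b ∈ S, b * a)
    (hassoc : ∀ (x : X) (a b : K), act (act x a) b = act x (a * b))
    (hone : ∀ x : X, act x 1 = x)
    (hsupS : ∀ (x : X) (S : Set K), act x (sSup S) = ⨆ a ∈ S, act x a)
    (hsupV : ∀ (U : Set X) (a : K), act (sSup U) a = ⨆ x ∈ U, act x a)
    (x y : X)
    (h : lres act x y * lres act y x = 1) :
    x = act y (lres act y x) := by
  have hmono : ∀ (u v : X) (a : K), u ≤ v → act u a ≤ act v a := by
    intro u v a huv
    have h1 : sSup ({u, v} : Set X) = v := by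
      rw [sSup_pair, sup_eq_right.mpr huv]
    have h2 := hsupV {u, v} a
    rw [h1] at h2
    rw [h2]
    exact le_iSup₂ (f := fun z _ => act z a) u (Set.mem_insert u {v})
  have hxy : act x (lres act x y) ≤ y := by
    rw [lres, hsupS]
    exact iSup₂_le fun a ha => ha
  have hyx : act y (lres act y x) ≤ x := by
    rw [lres, hsupS]
    exact iSup₂_le fun a ha => ha
  refine le_antisymm ?_ hyx
  calc x = act x 1 := (hone x).symm
    _ = act x (lres act x y * lres act y x) := by rw [h]
    _ = act (act x (lres act x y)) (lres act y x) := (hassoc _ _ _).symm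
    _ ≤ act y (lres act y x) := hmono _ _ _ hxy
end

section
/- (Projection maximizes the generalized Hilbert metric) Let V be a complete subsemimodule of a complete right K-semimodule X, and x ∈ X. Then for every v ∈ V, d_H(x,v) ≤ d_H(x, P_V(x)), where d_H(x,y) = (x\y)(y\x) and P_V(x) = max{w ∈ V : w ≤ x}. -/
variable {K : Type*} [CompleteLattice K] [Monoid K]
variable {X : Type*} [CompleteLattice X]

/-- Projection maximizes the generalized Hilbert metric:
d_H(x,v) ≤ d_H(x,P_V(x)) for all v ∈ V. -/
theorem hilbert_projection_maximizes
    (act : X → K → X)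
    (hKl : ∀ (a : K) (S : Set K), a * sSup S = ⨆ b ∈ S, a * b)
    (hKr : ∀ (a : K) (S : Set K), sSup S * a = ⨆ b ∈ S, b * a)
    (hassoc : ∀ (x : X) (a b : K), act (act x a) b = act x (a * b))
    (hone : ∀ x : X, act x 1 = x)
    (hsupS : ∀ (x : X) (S : Set K), act x (sSup S) = ⨆ a ∈ S, act x a)
    (hsupV : ∀ (U : Set X) (a : K), act (sSup U) a = ⨆ x ∈ U, act x a)
    (V : Set X)
    (hVsup : ∀ U : Set X, U ⊆ V → sSup U ∈ V)
    (hVact : ∀ v ∈ V, ∀ a : K, act v a ∈ V)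
    (x : X) :
    ∀ v ∈ V, lres act x v * lres act v x ≤
      lres act x (proj V x) * lres act (proj V x) x := by
  intro v hv
  set p := proj V x with hp
  -- multiplication is monotone
  have mul_mono : ∀ a b c d : K, a ≤ c → b ≤ d → a * b ≤ c * d := by
    intro a b c d hac hbd
    have h1 : a * b ≤ a * d := by
      have : a * sSup {b, d} = ⨆ e ∈ ({b, d} : Set K), a * e := hKl a _
      have hsup : sSup ({b, d} : Set K) = d := by
        rw [sSup_pair]; exact sup_eq_right.mpr hbd
      rw [hsup] at this
      rw [this]
      exact le_biSup (fun e => a * e) (by simp)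
    have h2 : a * d ≤ c * d := by
      have : sSup ({a, c} : Set K) * d = ⨆ e ∈ ({a, c} : Set K), e * d := hKr d _
      have hsup : sSup ({a, c} : Set K) = c := by
        rw [sSup_pair]; exact sup_eq_right.mpr hac
      rw [hsup] at this
      rw [this]
      exact le_biSup (fun e => e * d) (by simp)
    exact h1.trans h2
  -- act monotone in second argument
  have act_mono_r : ∀ (y : X) (a b : K), a ≤ b → act y a ≤ act y b := by
    intro y a b hab
    have : act y (sSup {a, b}) = ⨆ e ∈ ({a, b} : Set K), act y e := hsupS y _
    have hsup : sSup ({a, b} : Set K) = b := by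
      rw [sSup_pair]; exact sup_eq_right.mpr hab
    rw [hsup] at this
    rw [this]
    exact le_biSup (fun e => act y e) (by simp)
  -- act monotone in first argument
  have act_mono_l : ∀ (y z : X) (a : K), y ≤ z → act y a ≤ act z a := by
    intro y z a hyz
    have : act (sSup {y, z}) a = ⨆ w ∈ ({y, z} : Set X), act w a := hsupV _ a
    have hsup : sSup ({y, z} : Set X) = z := by
      rw [sSup_pair]; exact sup_eq_right.mpr hyz
    rw [hsup] at this
    rw [this]
    exact le_biSup (fun w => act w a) (by simp)
  -- act y (lres act y z) ≤ z
  have act_lres : ∀ y z : X, act y (lres act y z) ≤ z := by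
    intro y z
    rw [lres, hsupS]
    exact iSup₂_le fun a ha => ha
  have le_lres : ∀ (y z : X) (a : K), act y a ≤ z → a ≤ lres act y z :=
    fun y z a h => le_sSup h
  -- p ≤ x
  have hpx : p ≤ x := sSup_le fun w hw => hw.2
  -- 1 ≤ lres act p x
  have h1 : (1 : K) ≤ lres act p x := le_lres _ _ _ (by rw [hone]; exact hpx)
  -- act v (lres act v x) ≤ p
  have hvb : act v (lres act v x) ≤ p := by
    apply le_sSup
    exact ⟨hVact v hv _, act_lres v x⟩
  -- lres act x v * lres act v x ≤ lres act x p
  have key2 : lres act x v * lres act v x ≤ lres act x p := by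
    apply le_lres
    rw [← hassoc]
    calc act (act x (lres act x v)) (lres act v x)
        ≤ act v (lres act v x) := act_mono_l _ _ _ (act_lres x v)
      _ ≤ p := hvb
  calc lres act x v * lres act v x
      = lres act x v * lres act v x * 1 := (mul_one _).symm
    _ ≤ lres act x p * lres act p x := mul_mono _ _ _ _ key2 h1
end

section
/- (Reflexivity of complete idempotent semifields) Let K be a complete idempotent semiring in which every element other than the bottom ε and the top ⊤ is multiplicatively invertible, and K ≠ {ε, e}. Fix any invertible φ ∈ K and define x♭ = max{y : yx ≤ φ} and x♯ = max{y : xy ≤ φ}. Then (x♭)♯ = x and (x♯)♭ = x for all x ∈ K. -/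
/-- A complete idempotent semifield (every element other than ⊥ and ⊤ is
invertible, and K ≠ {ε, e}) is reflexive: for any invertible φ, the
conjugations x♭ = ⊔{y | y*x ≤ φ} and x♯ = ⊔{y | x*y ≤ φ} are mutually
inverse, i.e. (x♭)♯ = x and (x♯)♭ = x for all x. -/
theorem complete_semifield_reflexive
    {K : Type*} [CompleteLattice K] [Monoid K]
    (hKl : ∀ (a : K) (S : Set K), a * sSup S = ⨆ b ∈ S, a * b)
    (hKr : ∀ (a : K) (S : Set K), sSup S * a = ⨆ b ∈ S, b * a)
    (hinv : ∀ x : K, x ≠ ⊥ → x ≠ ⊤ → ∃ y : K, x * y = 1 ∧ y * x = 1)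
    (hne : ∃ x : K, x ≠ ⊥ ∧ x ≠ 1)
    (φ : K) (hφ : ∃ ψ : K, φ * ψ = 1 ∧ ψ * φ = 1) :
    ∀ x : K,
      sSup {y : K | sSup {z : K | z * x ≤ φ} * y ≤ φ} = x ∧
      sSup {y : K | y * sSup {z : K | x * z ≤ φ} ≤ φ} = x := by
  obtain ⟨ψ, hψ1, hψ2⟩ := hφ
  -- basic facts
  have mul_bot : ∀ a : K, a * (⊥ : K) = ⊥ := by
    intro a
    have h := hKl a ∅
    simpa using h
  have bot_mul : ∀ a : K, (⊥ : K) * a = ⊥ := by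
    intro a
    have h := hKr a ∅
    simpa using h
  have mul_sup_l : ∀ a b c : K, a * (b ⊔ c) = a * b ⊔ a * c := by
    intro a b c
    have h := hKl a {b, c}
    simpa [sSup_pair, iSup_or, iSup_sup_eq] using h
  have mul_sup_r : ∀ a b c : K, (b ⊔ c) * a = b * a ⊔ c * a := by
    intro a b c
    have h := hKr a {b, c}
    simpa [sSup_pair, iSup_or, iSup_sup_eq] using h
  have mono_l : ∀ a b c : K, b ≤ c → a * b ≤ a * c := by
    intro a b c h
    have : a * (b ⊔ c) = a * b ⊔ a * c := mul_sup_l a b c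
    rw [sup_eq_right.mpr h] at this
    rw [this]; exact le_sup_left
  have mono_r : ∀ a b c : K, b ≤ c → b * a ≤ c * a := by
    intro a b c h
    have : (b ⊔ c) * a = b * a ⊔ c * a := mul_sup_r a b c
    rw [sup_eq_right.mpr h] at this
    rw [this]; exact le_sup_left
  have one_ne_bot : (1 : K) ≠ ⊥ := by
    intro h
    obtain ⟨x, hx1, _⟩ := hne
    exact hx1 (by rw [← mul_one x, h, mul_bot])
  have top_mul_top : (⊤ : K) * ⊤ = ⊤ := by
    refine le_antisymm le_top ?_
    calc (⊤ : K) = 1 * ⊤ := (one_mul _).symm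
    _ ≤ ⊤ * ⊤ := mono_r _ _ _ le_top
  have top_ne_one : (⊤ : K) ≠ 1 := by
    intro h
    obtain ⟨x, hx1, hx2⟩ := hne
    have hxt : x ≠ ⊤ := fun hh => hx2 (hh.trans h)
    obtain ⟨w, hw1, hw2⟩ := hinv x hx1 hxt
    have hw : w ≤ 1 := h ▸ le_top
    have : (1 : K) ≤ x := by
      calc (1 : K) = x * w := hw1.symm
      _ ≤ x * 1 := mono_l _ _ _ hw
      _ = x := mul_one x
    exact hx2 (le_antisymm (h ▸ le_top) this)
  -- top absorbs nonzero elements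
  have top_mul : ∀ y : K, y ≠ ⊥ → (⊤ : K) * y = ⊤ := by
    intro y hy
    by_cases hyt : y = ⊤
    · rw [hyt, top_mul_top]
    · obtain ⟨w, hw1, hw2⟩ := hinv y hy hyt
      refine le_antisymm le_top ?_
      calc (⊤ : K) = ⊤ * 1 := (mul_one _).symm
      _ = ⊤ * (w * y) := by rw [hw2]
      _ = (⊤ * w) * y := (mul_assoc _ _ _).symm
      _ ≤ ⊤ * y := mono_r _ _ _ le_top
  have mul_top : ∀ y : K, y ≠ ⊥ → y * (⊤ : K) = ⊤ := by
    intro y hy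
    by_cases hyt : y = ⊤
    · rw [hyt, top_mul_top]
    · obtain ⟨w, hw1, hw2⟩ := hinv y hy hyt
      refine le_antisymm le_top ?_
      calc (⊤ : K) = 1 * ⊤ := (one_mul _).symm
      _ = (y * w) * ⊤ := by rw [hw1]
      _ = y * (w * ⊤) := mul_assoc _ _ _
      _ ≤ y * ⊤ := mono_l _ _ _ le_top
  have φ_ne_bot : φ ≠ ⊥ := by
    intro h
    exact one_ne_bot (by rw [← hψ1, h, bot_mul])
  have φ_ne_top : φ ≠ ⊤ := by
    intro h
    have hψb : ψ ≠ ⊥ := by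
      intro hb
      exact one_ne_bot (by rw [← hψ1, hb, mul_bot])
    have : (⊤ : K) = 1 := by rw [← hψ1, h, top_mul ψ hψb]
    exact top_ne_one this
  -- sSup of a principal downset
  have sSup_le_set : ∀ c : K, sSup {z : K | z ≤ c} = c := by
    intro c
    exact le_antisymm (sSup_le fun z hz => hz) (le_sSup (le_refl c))
  -- residuals of invertible elements
  have flat_l : ∀ a b : K, a * b = 1 → b * a = 1 →
      sSup {z : K | z * a ≤ φ} = φ * b := by
    intro a b hab hba
    have hset : {z : K | z * a ≤ φ} = {z : K | z ≤ φ * b} := by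
      ext z
      constructor
      · intro h
        calc z = z * (a * b) := by rw [hab, mul_one]
        _ = (z * a) * b := (mul_assoc _ _ _).symm
        _ ≤ φ * b := mono_r _ _ _ h
      · intro h
        calc z * a ≤ (φ * b) * a := mono_r _ _ _ h
        _ = φ * (b * a) := mul_assoc _ _ _
        _ = φ := by rw [hba, mul_one]
    rw [hset, sSup_le_set]
  have flat_r : ∀ a b : K, a * b = 1 → b * a = 1 →
      sSup {z : K | a * z ≤ φ} = b * φ := by
    intro a b hab hba
    have hset : {z : K | a * z ≤ φ} = {z : K | z ≤ b * φ} := by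
      ext z
      constructor
      · intro h
        calc z = (b * a) * z := by rw [hba, one_mul]
        _ = b * (a * z) := mul_assoc _ _ _
        _ ≤ b * φ := mono_l _ _ _ h
      · intro h
        calc a * z ≤ a * (b * φ) := mono_l _ _ _ h
        _ = (a * b) * φ := (mul_assoc _ _ _).symm
        _ = φ := by rw [hab, one_mul]
    rw [hset, sSup_le_set]
  -- the "top kills" sets
  have top_set_l : sSup {y : K | (⊤ : K) * y ≤ φ} = ⊥ := by
    refine le_antisymm (sSup_le fun y hy => ?_) bot_le
    by_contra hyb
    have hyb' : y ≠ ⊥ := by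
      intro h; exact hyb (h ▸ le_refl _)
    have : (⊤ : K) ≤ φ := by rw [← top_mul y hyb']; exact hy
    exact φ_ne_top (le_antisymm le_top this)
  have top_set_r : sSup {y : K | y * (⊤ : K) ≤ φ} = ⊥ := by
    refine le_antisymm (sSup_le fun y hy => ?_) bot_le
    by_contra hyb
    have hyb' : y ≠ ⊥ := by
      intro h; exact hyb (h ▸ le_refl _)
    have : (⊤ : K) ≤ φ := by rw [← mul_top y hyb']; exact hy
    exact φ_ne_top (le_antisymm le_top this)
  have bot_set_l : sSup {y : K | (⊥ : K) * y ≤ φ} = ⊤ := by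
    have : {y : K | (⊥ : K) * y ≤ φ} = Set.univ := by
      ext y; simp [bot_mul]
    rw [this, sSup_univ]
  have bot_set_r : sSup {y : K | y * (⊥ : K) ≤ φ} = ⊤ := by
    have : {y : K | y * (⊥ : K) ≤ φ} = Set.univ := by
      ext y; simp [mul_bot]
    rw [this, sSup_univ]
  intro x
  by_cases hxb : x = ⊥
  · subst hxb
    constructor
    · rw [show {z : K | z * (⊥ : K) ≤ φ} = {y : K | y * (⊥ : K) ≤ φ} from rfl,
        bot_set_r, top_set_l]
    · rw [show {z : K | (⊥ : K) * z ≤ φ} = {y : K | (⊥ : K) * y ≤ φ} from rfl,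
        bot_set_l, top_set_r]
  · by_cases hxt : x = ⊤
    · subst hxt
      constructor
      · rw [show {z : K | z * (⊤ : K) ≤ φ} = {y : K | y * (⊤ : K) ≤ φ} from rfl,
          top_set_r, bot_set_l]
      · rw [show {z : K | (⊤ : K) * z ≤ φ} = {y : K | (⊤ : K) * y ≤ φ} from rfl,
          top_set_l, bot_set_r]
    · obtain ⟨w, hw1, hw2⟩ := hinv x hxb hxt
      constructor
      · -- sSup {z | z * x ≤ φ} = φ * w, which has inverse x * ψ
        rw [flat_l x w hw1 hw2]
        have h1 : (φ * w) * (x * ψ) = 1 := by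
          calc (φ * w) * (x * ψ) = φ * ((w * x) * ψ) := by
                rw [mul_assoc, mul_assoc]
          _ = φ * ψ := by rw [hw2, one_mul]
          _ = 1 := hψ1
        have h2 : (x * ψ) * (φ * w) = 1 := by
          calc (x * ψ) * (φ * w) = x * ((ψ * φ) * w) := by
                rw [mul_assoc, mul_assoc]
          _ = x * w := by rw [hψ2, one_mul]
          _ = 1 := hw1
        rw [flat_r (φ * w) (x * ψ) h1 h2]
        calc (x * ψ) * φ = x * (ψ * φ) := mul_assoc _ _ _
        _ = x := by rw [hψ2, mul_one]
      · -- sSup {z | x * z ≤ φ} = w * φ, which has inverse ψ * x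
        rw [flat_r x w hw1 hw2]
        have h1 : (w * φ) * (ψ * x) = 1 := by
          calc (w * φ) * (ψ * x) = w * ((φ * ψ) * x) := by
                rw [mul_assoc, mul_assoc]
          _ = w * x := by rw [hψ1, one_mul]
          _ = 1 := hw2
        have h2 : (ψ * x) * (w * φ) = 1 := by
          calc (ψ * x) * (w * φ) = ψ * ((x * w) * φ) := by
                rw [mul_assoc, mul_assoc]
          _ = ψ * φ := by rw [hw1, one_mul]
          _ = 1 := hψ2
        rw [flat_l (w * φ) (ψ * x) h1 h2]
        calc φ * (ψ * x) = (φ * ψ) * x := (mul_assoc _ _ _).symm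
        _ = x := by rw [hψ1, one_mul]
end
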